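/- Let MT be a connected molecular tree of order n with n ≥ 5. Then SO₆(MT) ≤ π·[ (g(1,4)+g(2,4))·n/2 + (3g(1,4)−5g(2,4))/2 ] if n ≡ 1 (mod 4); SO₆(MT) ≤ π·[ (g(1,4)+g(2,4))·n/2 + 2g(1,4) − 5g(2,4) + g(3,4) ] if n ≡ 2 (mod 4); SO₆(MT) ≤ π·[ (g(1,4)+g(2,4))·n/2 + (5g(1,4)−11g(2,4))/2 ] if n ≡ 3 (mod 4); and SO₆(MT) ≤ π·[ (g(1,4)+g(2,4))·n/2 + 2g(1,4) − 4g(2,4) ] if n ≡ 0 (mod 4). -/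

import Mathlib

/-- `f a b = |a² − b²| / (√2 + 2√(a² + b²))`. -/
noncomputable def f (a b : ℝ) : ℝ :=
  |a ^ 2 - b ^ 2| / (Real.sqrt 2 + 2 * Real.sqrt (a ^ 2 + b ^ 2))

/-- `g a b = f(a,b)²`. -/
noncomputable def g (a b : ℝ) : ℝ := (f a b) ^ 2

theorem g_symm (a b : ℝ) : g a b = g b a := by
  unfold g f; rw [abs_sub_comm, add_comm (a ^ 2)]

/-- The Sombor-index-like invariant `SO₆(G) = π · Σ_{uv ∈ E(G)} g(d(u), d(v))`. -/
noncomputable def SO6 {V : Type*} [Fintype V] [DecidableEq V] (G : SimpleGraph V)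
    [DecidableRel G.Adj] : ℝ :=
  Real.pi * ∑ e ∈ G.edgeFinset,
    Sym2.lift ⟨fun u v => g (G.degree u) (G.degree v),
      fun u v => g_symm (G.degree u) (G.degree v)⟩ e



lemma sqrt_ub {x c : ℝ} (hc : 0 ≤ c) (h : x ≤ c^2) : Real.sqrt x ≤ c :=
  le_trans (Real.sqrt_le_sqrt h) (le_of_eq (Real.sqrt_sq hc))

lemma sqrt_lb {x c : ℝ} (hx : 0 ≤ x) (h : c^2 ≤ x) : c ≤ Real.sqrt x := by
  rcases le_or_gt c 0 with h0 | h0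
  · exact le_trans h0 (Real.sqrt_nonneg x)
  · nlinarith [Real.sq_sqrt hx, Real.sqrt_nonneg x]

lemma g_eq (a b s : ℝ) (h : a^2 + b^2 = s) : g a b = (a^2-b^2)^2 / (Real.sqrt 2 + 2 * Real.sqrt s)^2 := by
  have hd : 0 < Real.sqrt 2 + 2 * Real.sqrt s := by
    have : (0:ℝ) < Real.sqrt 2 := Real.sqrt_pos.mpr (by norm_num)
    nlinarith [Real.sqrt_nonneg s]
  rw [g, f, h, div_pow, sq_abs]

lemma g_self (a : ℝ) : g a a = 0 := by
  rw [g, f]; simp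

lemma g12_bounds : (0.2597:ℝ) ≤ g 1 2 ∧ g 1 2 ≤ 0.2598 := by
  have h2 : (1.414213:ℝ) ≤ Real.sqrt 2 ∧ Real.sqrt 2 ≤ 1.414214 :=
    ⟨sqrt_lb (by norm_num) (by norm_num), sqrt_ub (by norm_num) (by norm_num)⟩
  have hs : (2.236067:ℝ) ≤ Real.sqrt 5 ∧ Real.sqrt 5 ≤ 2.236068 :=
    ⟨sqrt_lb (by norm_num) (by norm_num), sqrt_ub (by norm_num) (by norm_num)⟩
  have he := g_eq 1 2 5 (by norm_num)
  have hdpos : (0:ℝ) < (Real.sqrt 2 + 2 * Real.sqrt 5)^2 := by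
    have : (0:ℝ) < Real.sqrt 2 := Real.sqrt_pos.mpr (by norm_num)
    positivity
  rw [he]
  constructor
  · rw [le_div_iff₀ hdpos]; nlinarith [h2.1, h2.2, hs.1, hs.2]
  · rw [div_le_iff₀ hdpos]; nlinarith [h2.1, h2.2, hs.1, hs.2]

lemma g13_bounds : (1.0686:ℝ) ≤ g 1 3 ∧ g 1 3 ≤ 1.0687 := by
  have h2 : (1.414213:ℝ) ≤ Real.sqrt 2 ∧ Real.sqrt 2 ≤ 1.414214 :=
    ⟨sqrt_lb (by norm_num) (by norm_num), sqrt_ub (by norm_num) (by norm_num)⟩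
  have hs : (3.162277:ℝ) ≤ Real.sqrt 10 ∧ Real.sqrt 10 ≤ 3.162278 :=
    ⟨sqrt_lb (by norm_num) (by norm_num), sqrt_ub (by norm_num) (by norm_num)⟩
  have he := g_eq 1 3 10 (by norm_num)
  have hdpos : (0:ℝ) < (Real.sqrt 2 + 2 * Real.sqrt 10)^2 := by
    have : (0:ℝ) < Real.sqrt 2 := Real.sqrt_pos.mpr (by norm_num)
    positivity
  rw [he]
  constructor
  · rw [le_div_iff₀ hdpos]; nlinarith [h2.1, h2.2, hs.1, hs.2]
  · rw [div_le_iff₀ hdpos]; nlinarith [h2.1, h2.2, hs.1, hs.2]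

lemma g14_bounds : (2.4109:ℝ) ≤ g 1 4 ∧ g 1 4 ≤ 2.4110 := by
  have h2 : (1.414213:ℝ) ≤ Real.sqrt 2 ∧ Real.sqrt 2 ≤ 1.414214 :=
    ⟨sqrt_lb (by norm_num) (by norm_num), sqrt_ub (by norm_num) (by norm_num)⟩
  have hs : (4.123105:ℝ) ≤ Real.sqrt 17 ∧ Real.sqrt 17 ≤ 4.123106 :=
    ⟨sqrt_lb (by norm_num) (by norm_num), sqrt_ub (by norm_num) (by norm_num)⟩
  have he := g_eq 1 4 17 (by norm_num)
  have hdpos : (0:ℝ) < (Real.sqrt 2 + 2 * Real.sqrt 17)^2 := by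
    have : (0:ℝ) < Real.sqrt 2 := Real.sqrt_pos.mpr (by norm_num)
    positivity
  rw [he]
  constructor
  · rw [le_div_iff₀ hdpos]; nlinarith [h2.1, h2.2, hs.1, hs.2]
  · rw [div_le_iff₀ hdpos]; nlinarith [h2.1, h2.2, hs.1, hs.2]

lemma g23_bounds : (0.3360:ℝ) ≤ g 2 3 ∧ g 2 3 ≤ 0.3361 := by
  have h2 : (1.414213:ℝ) ≤ Real.sqrt 2 ∧ Real.sqrt 2 ≤ 1.414214 :=
    ⟨sqrt_lb (by norm_num) (by norm_num), sqrt_ub (by norm_num) (by norm_num)⟩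
  have hs : (3.605551:ℝ) ≤ Real.sqrt 13 ∧ Real.sqrt 13 ≤ 3.605552 :=
    ⟨sqrt_lb (by norm_num) (by norm_num), sqrt_ub (by norm_num) (by norm_num)⟩
  have he := g_eq 2 3 13 (by norm_num)
  have hdpos : (0:ℝ) < (Real.sqrt 2 + 2 * Real.sqrt 13)^2 := by
    have : (0:ℝ) < Real.sqrt 2 := Real.sqrt_pos.mpr (by norm_num)
    positivity
  rw [he]
  constructor
  · rw [le_div_iff₀ hdpos]; nlinarith [h2.1, h2.2, hs.1, hs.2]
  · rw [div_le_iff₀ hdpos]; nlinarith [h2.1, h2.2, hs.1, hs.2]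

lemma g24_bounds : (1.3420:ℝ) ≤ g 2 4 ∧ g 2 4 ≤ 1.3421 := by
  have h2 : (1.414213:ℝ) ≤ Real.sqrt 2 ∧ Real.sqrt 2 ≤ 1.414214 :=
    ⟨sqrt_lb (by norm_num) (by norm_num), sqrt_ub (by norm_num) (by norm_num)⟩
  have hs : (4.472135:ℝ) ≤ Real.sqrt 20 ∧ Real.sqrt 20 ≤ 4.472136 :=
    ⟨sqrt_lb (by norm_num) (by norm_num), sqrt_ub (by norm_num) (by norm_num)⟩
  have he := g_eq 2 4 20 (by norm_num)
  have hdpos : (0:ℝ) < (Real.sqrt 2 + 2 * Real.sqrt 20)^2 := by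
    have : (0:ℝ) < Real.sqrt 2 := Real.sqrt_pos.mpr (by norm_num)
    positivity
  rw [he]
  constructor
  · rw [le_div_iff₀ hdpos]; nlinarith [h2.1, h2.2, hs.1, hs.2]
  · rw [div_le_iff₀ hdpos]; nlinarith [h2.1, h2.2, hs.1, hs.2]

lemma g34_bounds : (0.3761:ℝ) ≤ g 3 4 ∧ g 3 4 ≤ 0.3762 := by
  have h2 : (1.414213:ℝ) ≤ Real.sqrt 2 ∧ Real.sqrt 2 ≤ 1.414214 :=
    ⟨sqrt_lb (by norm_num) (by norm_num), sqrt_ub (by norm_num) (by norm_num)⟩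
  have hs : (5:ℝ) ≤ Real.sqrt 25 ∧ Real.sqrt 25 ≤ 5 :=
    ⟨sqrt_lb (by norm_num) (by norm_num), sqrt_ub (by norm_num) (by norm_num)⟩
  have he := g_eq 3 4 25 (by norm_num)
  have hdpos : (0:ℝ) < (Real.sqrt 2 + 2 * Real.sqrt 25)^2 := by
    have : (0:ℝ) < Real.sqrt 2 := Real.sqrt_pos.mpr (by norm_num)
    positivity
  rw [he]
  constructor
  · rw [le_div_iff₀ hdpos]; nlinarith [h2.1, h2.2, hs.1, hs.2]
  · rw [div_le_iff₀ hdpos]; nlinarith [h2.1, h2.2, hs.1, hs.2]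

set_option maxHeartbeats 1000000 in
lemma key (M11 M12 M13 M14 M22 M23 M24 M33 M34 M44 N1 N2 N3 N4 n : ℕ)
    (e1 : 2*M11+M12+M13+M14 = N1)
    (e2 : M12+2*M22+M23+M24 = 2*N2)
    (e3 : M13+M23+2*M33+M34 = 3*N3)
    (e4 : M14+M24+M34+2*M44 = 4*N4)
    (eN : N1+N2+N3+N4 = n)
    (eE : M11+M12+M13+M14+M22+M23+M24+M33+M34+M44+1 = n) :
    (n % 4 = 1 → g 1 2 * M12 + g 1 3 * M13 + g 1 4 * M14 + g 2 3 * M23 + g 2 4 * M24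
       + g 3 4 * M34 ≤ (g 1 4 + g 2 4) / 2 * n + (3 * g 1 4 - 5 * g 2 4) / 2) ∧
    (n % 4 = 2 → g 1 2 * M12 + g 1 3 * M13 + g 1 4 * M14 + g 2 3 * M23 + g 2 4 * M24
       + g 3 4 * M34 ≤ (g 1 4 + g 2 4) / 2 * n + 2 * g 1 4 - 5 * g 2 4 + g 3 4) ∧
    (n % 4 = 3 → g 1 2 * M12 + g 1 3 * M13 + g 1 4 * M14 + g 2 3 * M23 + g 2 4 * M24
       + g 3 4 * M34 ≤ (g 1 4 + g 2 4) / 2 * n + (5 * g 1 4 - 11 * g 2 4) / 2) ∧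
    (n % 4 = 0 → g 1 2 * M12 + g 1 3 * M13 + g 1 4 * M14 + g 2 3 * M23 + g 2 4 * M24
       + g 3 4 * M34 ≤ (g 1 4 + g 2 4) / 2 * n + 2 * g 1 4 - 4 * g 2 4) := by
  obtain ⟨h14l, h14u⟩ := g14_bounds
  obtain ⟨h24l, h24u⟩ := g24_bounds
  obtain ⟨h34l, h34u⟩ := g34_bounds
  obtain ⟨h12l, h12u⟩ := g12_bounds
  obtain ⟨h13l, h13u⟩ := g13_bounds
  obtain ⟨h23l, h23u⟩ := g23_bounds
  have r1 : 2*(M11:ℝ)+M12+M13+M14 = N1 := by exact_mod_cast congrArg (Nat.cast : ℕ → ℝ) e1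
  have r2 : (M12:ℝ)+2*M22+M23+M24 = 2*N2 := by exact_mod_cast congrArg (Nat.cast : ℕ → ℝ) e2
  have r3 : (M13:ℝ)+M23+2*M33+M34 = 3*N3 := by exact_mod_cast congrArg (Nat.cast : ℕ → ℝ) e3
  have r4 : (M14:ℝ)+M24+M34+2*M44 = 4*N4 := by exact_mod_cast congrArg (Nat.cast : ℕ → ℝ) e4
  have rN : (N1:ℝ)+N2+N3+N4 = n := by exact_mod_cast congrArg (Nat.cast : ℕ → ℝ) eN
  have rE : (M11:ℝ)+M12+M13+M14+M22+M23+M24+M33+M34+M44+1 = n := by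
    exact_mod_cast congrArg (Nat.cast : ℕ → ℝ) eE
  have HID : g 1 2 * M12 + g 1 3 * M13 + g 1 4 * M14 + g 2 3 * M23 + g 2 4 * M24 + g 3 4 * M34
      + ((5*(g 1 4)-3*(g 2 4))/2 * M11 + ((3*(g 1 4)-(g 2 4))/2 - g 1 2) * M12
      + ((5*(g 1 4)-3*(g 2 4))/4 - g 1 3) * M13
      + ((g 1 4)+(g 2 4))/2 * M22 + (((g 1 4)+(g 2 4))/4 - g 2 3) * M23
      + ((3*(g 2 4)-(g 1 4))/4 - g 3 4) * M34
      + (3*(g 2 4)-(g 1 4))/2 * M44 + (7*(g 2 4)-(g 1 4))/4 * N3)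
      = ((g 1 4)+(g 2 4))/2 * n + (3*(g 1 4)-5*(g 2 4))/2 := by
    linear_combination (2*((g 1 4)-(g 2 4))) * r1 + ((g 1 4)-(g 2 4)) * r2
      + ((3*(g 1 4)-5*(g 2 4))/4) * r3 + (((g 1 4)-(g 2 4))/2) * r4
      + (2*((g 1 4)-(g 2 4))) * rN + ((5*(g 2 4)-3*(g 1 4))/2) * rE
  have hs11 : (0:ℝ) ≤ (5*(g 1 4)-3*(g 2 4))/2 := by linarith only [h14l, h24u]
  have hs12 : (0:ℝ) ≤ (3*(g 1 4)-(g 2 4))/2 - g 1 2 := by linarith only [h14l, h24u, h12u]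
  have hs13 : (0:ℝ) ≤ (5*(g 1 4)-3*(g 2 4))/4 - g 1 3 := by linarith only [h14l, h24u, h13u]
  have hs22 : (0:ℝ) ≤ ((g 1 4)+(g 2 4))/2 := by linarith only [h14l, h24l]
  have hs23 : (0:ℝ) ≤ ((g 1 4)+(g 2 4))/4 - g 2 3 := by linarith only [h14l, h24l, h23u]
  have hs34 : (0:ℝ) ≤ (3*(g 2 4)-(g 1 4))/4 - g 3 4 := by linarith only [h24l, h14u, h34u]
  have hs44 : (0:ℝ) ≤ (3*(g 2 4)-(g 1 4))/2 := by linarith only [h24l, h14u]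
  have hl3 : (0:ℝ) ≤ (7*(g 2 4)-(g 1 4))/4 := by linarith only [h24l, h14u]
  have p11 := mul_nonneg hs11 (Nat.cast_nonneg (α := ℝ) M11)
  have p12 := mul_nonneg hs12 (Nat.cast_nonneg (α := ℝ) M12)
  have p13 := mul_nonneg hs13 (Nat.cast_nonneg (α := ℝ) M13)
  have p22 := mul_nonneg hs22 (Nat.cast_nonneg (α := ℝ) M22)
  have p23 := mul_nonneg hs23 (Nat.cast_nonneg (α := ℝ) M23)
  have p34 := mul_nonneg hs34 (Nat.cast_nonneg (α := ℝ) M34)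
  have p44 := mul_nonneg hs44 (Nat.cast_nonneg (α := ℝ) M44)
  have pN3 := mul_nonneg hl3 (Nat.cast_nonneg (α := ℝ) N3)
  -- Penalty lower bound in the main (non-M44) branches:
  -- if N3 ≥ 1 or one of M11, M12, M22 ≥ 1, the penalty is at least D2 = (5g24-g14)/2 - g34.
  have HPEN : 1 ≤ N3 ∨ 1 ≤ M11 ∨ 1 ≤ M12 ∨ 1 ≤ M22 →
      (5*(g 2 4)-(g 1 4))/2 - g 3 4 ≤ (5*(g 1 4)-3*(g 2 4))/2 * M11
      + ((3*(g 1 4)-(g 2 4))/2 - g 1 2) * M12 + ((5*(g 1 4)-3*(g 2 4))/4 - g 1 3) * M13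
      + ((g 1 4)+(g 2 4))/2 * M22 + (((g 1 4)+(g 2 4))/4 - g 2 3) * M23
      + ((3*(g 2 4)-(g 1 4))/4 - g 3 4) * M34
      + (3*(g 2 4)-(g 1 4))/2 * M44 + (7*(g 2 4)-(g 1 4))/4 * N3 := by
    rintro (h | h | h | h)
    · rcases Nat.lt_or_ge N3 2 with hN3 | hN3
      · have hN3e : N3 = 1 := by omega
        have hone : 1 ≤ M13 + M23 + M34 := by omega
        have honeR : (1:ℝ) ≤ (M13:ℝ) + M23 + M34 := by exact_mod_cast hone
        have hN3R : (N3:ℝ) = 1 := by exact_mod_cast hN3e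
        have hq : (7*(g 2 4)-(g 1 4))/4 * (N3:ℝ) = (7*(g 2 4)-(g 1 4))/4 := by
          rw [hN3R]; ring
        have h1 : ((3*(g 2 4)-(g 1 4))/4 - g 3 4) * M13
            ≤ ((5*(g 1 4)-3*(g 2 4))/4 - g 1 3) * M13 :=
          mul_le_mul_of_nonneg_right (by linarith only [h14l, h24u, h24l, h14u, h34l, h13u])
            (Nat.cast_nonneg M13)
        have h2 : ((3*(g 2 4)-(g 1 4))/4 - g 3 4) * M23
            ≤ (((g 1 4)+(g 2 4))/4 - g 2 3) * M23 :=
          mul_le_mul_of_nonneg_right (by linarith only [h14l, h24l, h24u, h14u, h34l, h23u])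
            (Nat.cast_nonneg M23)
        have h3 : ((3*(g 2 4)-(g 1 4))/4 - g 3 4) * 1
            ≤ ((3*(g 2 4)-(g 1 4))/4 - g 3 4) * ((M13:ℝ) + M23 + M34) :=
          mul_le_mul_of_nonneg_left honeR hs34
        linarith only [h1, h2, h3, hq, p11, p12, p22, p44]
      · have hN3R : (2:ℝ) ≤ (N3:ℝ) := by exact_mod_cast hN3
        have hq : (7*(g 2 4)-(g 1 4))/4 * 2 ≤ (7*(g 2 4)-(g 1 4))/4 * (N3:ℝ) :=
          mul_le_mul_of_nonneg_left hN3R hl3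
        linarith only [hq, p11, p12, p13, p22, p23, p34, p44, h24l, h34l, h14u, h14l, h24u]
    · have hR : (1:ℝ) ≤ (M11:ℝ) := by exact_mod_cast h
      have hq : (5*(g 1 4)-3*(g 2 4))/2 * 1 ≤ (5*(g 1 4)-3*(g 2 4))/2 * (M11:ℝ) :=
        mul_le_mul_of_nonneg_left hR hs11
      linarith only [hq, p12, p13, p22, p23, p34, p44, pN3, h14l, h24u, h24l, h14u, h34l]
    · have hR : (1:ℝ) ≤ (M12:ℝ) := by exact_mod_cast h
      have hq : ((3*(g 1 4)-(g 2 4))/2 - g 1 2) * 1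
          ≤ ((3*(g 1 4)-(g 2 4))/2 - g 1 2) * (M12:ℝ) :=
        mul_le_mul_of_nonneg_left hR hs12
      linarith only [hq, p11, p13, p22, p23, p34, p44, pN3, h14l, h24u, h24l, h14u, h34l, h12u]
    · have hR : (1:ℝ) ≤ (M22:ℝ) := by exact_mod_cast h
      have hq : ((g 1 4)+(g 2 4))/2 * 1 ≤ ((g 1 4)+(g 2 4))/2 * (M22:ℝ) :=
        mul_le_mul_of_nonneg_left hR hs22
      linarith only [hq, p11, p12, p13, p23, p34, p44, pN3, h14l, h24u, h24l, h14u, h34l]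
  refine ⟨fun _ => ?_, fun hmod => ?_, fun hmod => ?_, fun hmod => ?_⟩
  · linarith only [HID, p11, p12, p13, p22, p23, p34, p44, pN3]
  · -- n % 4 = 2
    have hdisj : (1 ≤ N3 ∨ 1 ≤ M11 ∨ 1 ≤ M12 ∨ 1 ≤ M22) ∨ 3 ≤ M44 := by omega
    rcases hdisj with h | h
    · linarith only [HID, HPEN h]
    · have hR : (3:ℝ) ≤ (M44:ℝ) := by exact_mod_cast h
      have hq : (3*(g 2 4)-(g 1 4))/2 * 3 ≤ (3*(g 2 4)-(g 1 4))/2 * (M44:ℝ) :=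
        mul_le_mul_of_nonneg_left hR hs44
      linarith only [HID, hq, p11, p12, p13, p22, p23, p34, pN3, h24l, h34l, h14u]
  · -- n % 4 = 3
    have hdisj : (1 ≤ N3 ∨ 1 ≤ M11 ∨ 1 ≤ M12 ∨ 1 ≤ M22) ∨ 2 ≤ M44 := by omega
    rcases hdisj with h | h
    · linarith only [HID, HPEN h, h14l, h24u, h34u]
    · have hR : (2:ℝ) ≤ (M44:ℝ) := by exact_mod_cast h
      have hq : (3*(g 2 4)-(g 1 4))/2 * 2 ≤ (3*(g 2 4)-(g 1 4))/2 * (M44:ℝ) :=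
        mul_le_mul_of_nonneg_left hR hs44
      linarith only [HID, hq, p11, p12, p13, p22, p23, p34, pN3]
  · -- n % 4 = 0
    have hdisj : (1 ≤ N3 ∨ 1 ≤ M11 ∨ 1 ≤ M12 ∨ 1 ≤ M22) ∨ 1 ≤ M44 := by omega
    rcases hdisj with h | h
    · linarith only [HID, HPEN h, h24l, h34u]
    · have hR : (1:ℝ) ≤ (M44:ℝ) := by exact_mod_cast h
      have hq : (3*(g 2 4)-(g 1 4))/2 * 1 ≤ (3*(g 2 4)-(g 1 4))/2 * (M44:ℝ) :=
        mul_le_mul_of_nonneg_left hR hs44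
      linarith only [HID, hq, p11, p12, p13, p22, p23, p34, pN3]

-- auxiliary counting lemma
lemma card_filter_pair {α : Type*} [DecidableEq α] (p : α → Prop) [DecidablePred p]
    {u w : α} (h : u ≠ w) :
    (({u, w} : Finset α).filter p).card
      = (if p u then 1 else 0) + (if p w then 1 else 0) := by
  by_cases hu : p u <;> by_cases hw : p w <;>
    simp [Finset.filter_insert, Finset.filter_singleton, hu, hw,
      Finset.card_insert_of_notMem, h]

section Graph
variable {V : Type*} [Fintype V] [DecidableEq V] (G : SimpleGraph V) [DecidableRel G.Adj]

/-- normalized degree pattern of an edge -/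
noncomputable def pat2 : Sym2 V → ℕ × ℕ :=
  Sym2.lift ⟨fun u v => (min (G.degree u) (G.degree v), max (G.degree u) (G.degree v)),
    fun u v => by simp [min_comm, max_comm]⟩

lemma edge_term_eq (e : Sym2 V) :
    Sym2.lift ⟨fun u v => g (G.degree u) (G.degree v),
      fun u v => g_symm (G.degree u) (G.degree v)⟩ e
    = g ((pat2 G e).1 : ℝ) ((pat2 G e).2 : ℝ) := by
  induction e using Sym2.ind with
  | _ u v =>
    rcases le_total (G.degree u) (G.degree v) with h | h
    · simp [pat2, min_eq_left h, max_eq_right h]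
    · simp only [pat2, Sym2.lift_mk, min_eq_right h, max_eq_left h]
      exact g_symm _ _

/-- number of endpoints of an edge having degree `a` -/
lemma endpoint_count (a : ℕ) (e : Sym2 V) (he : e ∈ G.edgeFinset) :
    (Finset.univ.filter (fun v => G.degree v = a ∧ v ∈ e)).card
      = (if (pat2 G e).1 = a then 1 else 0) + (if (pat2 G e).2 = a then 1 else 0) := by
  induction e using Sym2.ind with
  | _ u w =>
    have hadj : G.Adj u w := by
      rw [SimpleGraph.mem_edgeFinset, SimpleGraph.mem_edgeSet] at he
      exact he
    have hne : u ≠ w := hadj.ne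
    have hset : (Finset.univ.filter (fun v => G.degree v = a ∧ v ∈ (s(u,w) : Sym2 V)))
        = ({u, w} : Finset V).filter (fun v => G.degree v = a) := by
      ext v
      simp [Sym2.mem_iff, and_comm]
    rw [hset, card_filter_pair _ hne]
    rcases le_total (G.degree u) (G.degree w) with h | h
    · simp [pat2, min_eq_left h, max_eq_right h]
    · simp only [pat2, Sym2.lift_mk, min_eq_right h, max_eq_left h]
      omega

/-- the degree-sum equation for vertices of degree `a` -/
lemma deg_eq (a : ℕ) :
    ∑ e ∈ G.edgeFinset,
      ((if (pat2 G e).1 = a then 1 else 0) + (if (pat2 G e).2 = a then 1 else 0))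
    = a * (Finset.univ.filter (fun v => G.degree v = a)).card := by
  have h1 : ∀ v ∈ Finset.univ.filter (fun v => G.degree v = a), G.degree v = a :=
    fun v hv => (Finset.mem_filter.mp hv).2
  have h2 : a * (Finset.univ.filter (fun v => G.degree v = a)).card
      = ∑ v ∈ Finset.univ.filter (fun v => G.degree v = a), G.degree v := by
    rw [Finset.sum_const_nat h1, mul_comm]
  rw [h2]
  have h3 : ∀ v : V, G.degree v = ∑ e ∈ G.edgeFinset, (if v ∈ e then 1 else 0) := by
    intro v
    rw [← SimpleGraph.card_incidenceFinset_eq_degree, SimpleGraph.incidenceFinset_eq_filter,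
      Finset.card_filter]
  calc ∑ e ∈ G.edgeFinset,
      ((if (pat2 G e).1 = a then 1 else 0) + (if (pat2 G e).2 = a then 1 else 0))
      = ∑ e ∈ G.edgeFinset,
          (Finset.univ.filter (fun v => G.degree v = a ∧ v ∈ e)).card := by
        exact Finset.sum_congr rfl (fun e he => (endpoint_count G a e he).symm)
    _ = ∑ e ∈ G.edgeFinset, ∑ v ∈ Finset.univ.filter (fun v => G.degree v = a),
          (if v ∈ e then 1 else 0) := by
        refine Finset.sum_congr rfl (fun e _ => ?_)
        rw [Finset.card_filter, Finset.sum_filter]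
        simp [ite_and]
    _ = ∑ v ∈ Finset.univ.filter (fun v => G.degree v = a), G.degree v := by
        rw [Finset.sum_comm]
        exact Finset.sum_congr rfl (fun v _ => (h3 v).symm)

end Graph


/-- Maximum of `SO₆` over molecular trees of order `n ≥ 5`, according to the residue of
`n` modulo `4`. -/
theorem SO6_molecular_tree_upper_bound {V : Type*} [Fintype V] [DecidableEq V]
    (G : SimpleGraph V) [DecidableRel G.Adj] (hT : G.IsTree) (hdeg : ∀ v : V, G.degree v ≤ 4)
    (n : ℕ) (hn : Fintype.card V = n) (hn5 : 5 ≤ n) :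
    (n % 4 = 1 → SO6 G ≤ Real.pi *
      ((g 1 4 + g 2 4) / 2 * n + (3 * g 1 4 - 5 * g 2 4) / 2)) ∧
    (n % 4 = 2 → SO6 G ≤ Real.pi *
      ((g 1 4 + g 2 4) / 2 * n + 2 * g 1 4 - 5 * g 2 4 + g 3 4)) ∧
    (n % 4 = 3 → SO6 G ≤ Real.pi *
      ((g 1 4 + g 2 4) / 2 * n + (5 * g 1 4 - 11 * g 2 4) / 2)) ∧
    (n % 4 = 0 → SO6 G ≤ Real.pi *
      ((g 1 4 + g 2 4) / 2 * n + 2 * g 1 4 - 4 * g 2 4)) := by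
  classical
  -- degrees are at least 1
  have hdeg1 : ∀ v : V, 1 ≤ G.degree v := by
    intro v
    have hcard : 1 < Fintype.card V := by omega
    obtain ⟨w, -, hw⟩ := Finset.exists_mem_ne (s := Finset.univ) (by simpa using hcard) v
    obtain ⟨p⟩ := hT.isConnected.preconnected v w
    cases p with
    | nil => exact absurd rfl hw
    | cons h q => exact G.degree_pos_iff_exists_adj v |>.mpr ⟨_, h⟩
  set P10 : Finset (ℕ × ℕ) :=
    {(1,1),(1,2),(1,3),(1,4),(2,2),(2,3),(2,4),(3,3),(3,4),(4,4)} with hP10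
  set m : ℕ × ℕ → ℕ := fun q => (G.edgeFinset.filter (fun e => pat2 G e = q)).card with hm
  set N : ℕ → ℕ := fun a => (Finset.univ.filter (fun v => G.degree v = a)).card with hN
  have hpat : ∀ e ∈ G.edgeFinset, pat2 G e ∈ P10 := by
    intro e he
    induction e using Sym2.ind with
    | _ u w =>
      have h1 := hdeg1 u; have h2 := hdeg u; have h3 := hdeg1 w; have h4 := hdeg w
      rcases le_total (G.degree u) (G.degree w) with h | h
      · simp only [pat2, Sym2.lift_mk, min_eq_left h, max_eq_right h, hP10,
          Finset.mem_insert, Finset.mem_singleton, Prod.mk.injEq]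
        omega
      · simp only [pat2, Sym2.lift_mk, min_eq_right h, max_eq_left h, hP10,
          Finset.mem_insert, Finset.mem_singleton, Prod.mk.injEq]
        omega
  -- the edge-sum decomposed over patterns
  have hS : ∑ e ∈ G.edgeFinset,
      Sym2.lift ⟨fun u v => g (G.degree u) (G.degree v),
        fun u v => g_symm (G.degree u) (G.degree v)⟩ e
      = ∑ q ∈ P10, (m q : ℝ) * g (q.1 : ℝ) (q.2 : ℝ) := by
    calc ∑ e ∈ G.edgeFinset,
        Sym2.lift ⟨fun u v => g (G.degree u) (G.degree v),
          fun u v => g_symm (G.degree u) (G.degree v)⟩ e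
        = ∑ e ∈ G.edgeFinset, g ((pat2 G e).1 : ℝ) ((pat2 G e).2 : ℝ) :=
          Finset.sum_congr rfl (fun e _ => edge_term_eq G e)
      _ = ∑ e ∈ G.edgeFinset.filter (fun e => pat2 G e ∈ P10),
            g ((pat2 G e).1 : ℝ) ((pat2 G e).2 : ℝ) := by
          rw [Finset.filter_true_of_mem hpat]
      _ = ∑ q ∈ P10, ∑ e ∈ G.edgeFinset.filter (fun e => pat2 G e = q),
            g ((q.1 : ℝ)) ((q.2 : ℝ)) :=
          (Finset.sum_fiberwise_eq_sum_filter' G.edgeFinset P10 (pat2 G)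
            (fun q => g (q.1 : ℝ) (q.2 : ℝ))).symm
      _ = ∑ q ∈ P10, (m q : ℝ) * g (q.1 : ℝ) (q.2 : ℝ) := by
          refine Finset.sum_congr rfl (fun q _ => ?_)
          rw [Finset.sum_const, nsmul_eq_mul, hm]
  -- the degree equations
  have hdegq : ∀ a : ℕ,
      ∑ q ∈ P10, m q * ((if q.1 = a then 1 else 0) + (if q.2 = a then 1 else 0))
        = a * N a := by
    intro a
    rw [hN, ← deg_eq G a]
    calc ∑ q ∈ P10, m q * ((if q.1 = a then 1 else 0) + (if q.2 = a then 1 else 0))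
        = ∑ q ∈ P10, ∑ e ∈ G.edgeFinset.filter (fun e => pat2 G e = q),
            ((if q.1 = a then 1 else 0) + (if q.2 = a then 1 else 0)) := by
          refine Finset.sum_congr rfl (fun q _ => ?_)
          rw [Finset.sum_const, smul_eq_mul, hm]
      _ = ∑ e ∈ G.edgeFinset.filter (fun e => pat2 G e ∈ P10),
            ((if (pat2 G e).1 = a then 1 else 0) + (if (pat2 G e).2 = a then 1 else 0)) :=
          Finset.sum_fiberwise_eq_sum_filter' G.edgeFinset P10 (pat2 G)
            (fun q => (if q.1 = a then 1 else 0) + (if q.2 = a then 1 else 0))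
      _ = ∑ e ∈ G.edgeFinset,
            ((if (pat2 G e).1 = a then 1 else 0) + (if (pat2 G e).2 = a then 1 else 0)) := by
          rw [Finset.filter_true_of_mem hpat]
  -- edge count
  have hE : (∑ q ∈ P10, m q) + 1 = n := by
    have h1 : G.edgeFinset.card = ∑ q ∈ P10, m q :=
      Finset.card_eq_sum_card_fiberwise hpat
    have h2 := hT.card_edgeFinset
    rw [hn] at h2
    omega
  -- vertex count
  have hNsum : ∑ a ∈ ({1,2,3,4} : Finset ℕ), N a = n := by
    have h1 : (Finset.univ : Finset V).card
        = ∑ a ∈ ({1,2,3,4} : Finset ℕ),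
            (Finset.univ.filter (fun v => G.degree v = a)).card := by
      refine Finset.card_eq_sum_card_fiberwise (fun v _ => ?_)
      have := hdeg1 v; have := hdeg v
      simp only [Finset.coe_insert, Finset.coe_singleton, Set.mem_insert_iff,
        Set.mem_singleton_iff, Finset.mem_insert, Finset.mem_singleton]
      omega
    rw [hN]
    simp only [← h1]
    simpa using hn
  -- generic expansion of sums over P10
  have hexpP : ∀ (F : ℕ × ℕ → ℕ), ∑ q ∈ P10, F q
      = F (1,1) + F (1,2) + F (1,3) + F (1,4) + F (2,2) + F (2,3) + F (2,4)
        + F (3,3) + F (3,4) + F (4,4) := by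
    intro F
    rw [hP10, Finset.sum_insert (by decide), Finset.sum_insert (by decide),
      Finset.sum_insert (by decide), Finset.sum_insert (by decide),
      Finset.sum_insert (by decide), Finset.sum_insert (by decide),
      Finset.sum_insert (by decide), Finset.sum_insert (by decide),
      Finset.sum_insert (by decide), Finset.sum_singleton]
    ring
  have e1 : 2 * m (1,1) + m (1,2) + m (1,3) + m (1,4) = N 1 := by
    have h := hdegq 1
    rw [hexpP] at h
    norm_num [-Prod.mk_one_one] at h
    omega
  have e2 : m (1,2) + 2 * m (2,2) + m (2,3) + m (2,4) = 2 * N 2 := by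
    have h := hdegq 2
    rw [hexpP] at h
    norm_num [-Prod.mk_one_one] at h
    omega
  have e3 : m (1,3) + m (2,3) + 2 * m (3,3) + m (3,4) = 3 * N 3 := by
    have h := hdegq 3
    rw [hexpP] at h
    norm_num [-Prod.mk_one_one] at h
    omega
  have e4 : m (1,4) + m (2,4) + m (3,4) + 2 * m (4,4) = 4 * N 4 := by
    have h := hdegq 4
    rw [hexpP] at h
    norm_num [-Prod.mk_one_one] at h
    omega
  have eN' : N 1 + N 2 + N 3 + N 4 = n := by
    have h := hNsum
    rw [Finset.sum_insert (by decide), Finset.sum_insert (by decide),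
      Finset.sum_insert (by decide), Finset.sum_singleton] at h
    omega
  have eE' : m (1,1) + m (1,2) + m (1,3) + m (1,4) + m (2,2) + m (2,3) + m (2,4)
      + m (3,3) + m (3,4) + m (4,4) + 1 = n := by
    have h := hE
    rw [hexpP] at h
    omega
  have hKEY := key (m (1,1)) (m (1,2)) (m (1,3)) (m (1,4)) (m (2,2)) (m (2,3)) (m (2,4))
    (m (3,3)) (m (3,4)) (m (4,4)) (N 1) (N 2) (N 3) (N 4) n e1 e2 e3 e4 eN' eE'
  -- rewrite the edge sum into the explicit form
  have hS' : ∑ e ∈ G.edgeFinset,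
      Sym2.lift ⟨fun u v => g (G.degree u) (G.degree v),
        fun u v => g_symm (G.degree u) (G.degree v)⟩ e
      = g 1 2 * m (1,2) + g 1 3 * m (1,3) + g 1 4 * m (1,4) + g 2 3 * m (2,3)
        + g 2 4 * m (2,4) + g 3 4 * m (3,4) := by
    rw [hS, hP10]
    rw [Finset.sum_insert (by decide), Finset.sum_insert (by decide),
      Finset.sum_insert (by decide), Finset.sum_insert (by decide),
      Finset.sum_insert (by decide), Finset.sum_insert (by decide),
      Finset.sum_insert (by decide), Finset.sum_insert (by decide),
      Finset.sum_insert (by decide), Finset.sum_singleton]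
    push_cast
    rw [g_self, g_self, g_self, g_self]
    ring
  have hpi : (0:ℝ) ≤ Real.pi := Real.pi_nonneg
  unfold SO6
  refine ⟨fun h => ?_, fun h => ?_, fun h => ?_, fun h => ?_⟩
  · exact mul_le_mul_of_nonneg_left (by rw [hS']; exact hKEY.1 h) hpi
  · exact mul_le_mul_of_nonneg_left (by rw [hS']; exact hKEY.2.1 h) hpi
  · exact mul_le_mul_of_nonneg_left (by rw [hS']; exact hKEY.2.2.1 h) hpi
  · exact mul_le_mul_of_nonneg_left (by rw [hS']; exact hKEY.2.2.2 h) hpi
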